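/- Let A ∈ ℝ^{m×n} with SVD having distinct nonzero singular values, and let b have nonzero components in all left singular directions. Then the Krylov subspace K_k(AᵀA, Aᵀb) = span{Aᵀb, (AᵀA)Aᵀb, ..., (AᵀA)^{k-1}Aᵀb} has dimension exactly k for every k ≤ n, and it equals the column span of V·[I; Δ_k] where Δ_k = D₂ T_{k2} T_{k1}^{-1} D₁^{-1} in the notation below. -/

import Mathlib

open Matrix

/-- let `A = U [Σ;0] Vᵀ ∈ ℝ^{m×n}` (`n = k + r`) have distinct positive
singular values `σ₁ > ... > σ_n > 0`, and suppose `u_iᵀ b ≠ 0` for all `i ≤ n`.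
Then the Krylov subspace `K_k(AᵀA, Aᵀb)` has dimension exactly `k`, and it equals
the column span of `V·[I; Δ_k]` where `Δ_k = D₂ T_{k2} T_{k1}⁻¹ D₁⁻¹`. -/
theorem krylov_dim_and_span (m k r : ℕ) (hmn : k + r ≤ m)
    (A : Matrix (Fin m) (Fin (k + r)) ℝ)
    (U : Matrix (Fin m) (Fin m) ℝ) (hU : U.transpose * U = 1) (hU' : U * U.transpose = 1)
    (V : Matrix (Fin (k + r)) (Fin (k + r)) ℝ)
    (hV : V.transpose * V = 1) (hV' : V * V.transpose = 1)
    (σ : Fin (k + r) → ℝ) (hσpos : ∀ i, 0 < σ i) (hσanti : StrictAnti σ)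
    (hA : A = U * (Matrix.of fun (i : Fin m) (j : Fin (k + r)) =>
      if (i : ℕ) = (j : ℕ) then σ j else 0) * V.transpose)
    (b : Fin m → ℝ)
    (d : Fin (k + r) → ℝ) (hd : d = fun i => ∑ row, U row (Fin.castLE hmn i) * b row)
    (hb : ∀ i, d i ≠ 0)
    (D₁ : Matrix (Fin k) (Fin k) ℝ)
    (hD₁ : D₁ = Matrix.diagonal fun j => σ (Fin.castAdd r j) * d (Fin.castAdd r j))
    (D₂ : Matrix (Fin r) (Fin r) ℝ)
    (hD₂ : D₂ = Matrix.diagonal fun i => σ (Fin.natAdd k i) * d (Fin.natAdd k i))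
    (T₁ : Matrix (Fin k) (Fin k) ℝ)
    (hT₁ : T₁ = Matrix.of fun i (j : Fin k) => (σ (Fin.castAdd r i) ^ 2) ^ (j : ℕ))
    (T₂ : Matrix (Fin r) (Fin k) ℝ)
    (hT₂ : T₂ = Matrix.of fun i (j : Fin k) => (σ (Fin.natAdd k i) ^ 2) ^ (j : ℕ))
    (Δ : Matrix (Fin r) (Fin k) ℝ) (hΔ : Δ = D₂ * T₂ * T₁⁻¹ * D₁⁻¹)
    (Z : Matrix (Fin (k + r)) (Fin k) ℝ)
    (hZ : Z = V * Matrix.of fun (i : Fin (k + r)) (j : Fin k) =>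
      if h : (i : ℕ) < k then (if (⟨(i : ℕ), h⟩ : Fin k) = j then (1 : ℝ) else 0)
      else Δ ⟨(i : ℕ) - k, by have := i.isLt; omega⟩ j) :
    Module.finrank ℝ
        (Submodule.span ℝ (Set.range fun i : Fin k =>
          ((A.transpose * A) ^ (i : ℕ)) *ᵥ (A.transpose *ᵥ b))) = k ∧
      Submodule.span ℝ (Set.range fun i : Fin k =>
          ((A.transpose * A) ^ (i : ℕ)) *ᵥ (A.transpose *ᵥ b)) =
        Submodule.span ℝ (Set.range fun j : Fin k => Z.transpose j) := by
  classical
  set S : Matrix (Fin m) (Fin (k + r)) ℝ :=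
    Matrix.of (fun (i : Fin m) (j : Fin (k + r)) => if (i : ℕ) = (j : ℕ) then σ j else 0)
    with hS
  have hSalt : ∀ i j, S i j = if i = Fin.castLE hmn j then σ j else 0 := by
    intro i j
    by_cases h : (i : ℕ) = (j : ℕ) <;> simp [hS, h, Fin.ext_iff]
  -- AᵀA = V Σ² Vᵀ
  have hAT : Aᵀ = V * Sᵀ * Uᵀ := by
    rw [hA]; simp [Matrix.transpose_mul, Matrix.mul_assoc]
  have hSS : Sᵀ * S = Matrix.diagonal (fun i => σ i ^ 2) := by
    ext i j
    simp only [Matrix.mul_apply, Matrix.transpose_apply, hSalt, Matrix.diagonal_apply]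
    rw [Finset.sum_congr rfl (fun l _ => ?_), Finset.sum_ite_eq'
      (Finset.univ : Finset (Fin m)) (Fin.castLE hmn i)
      (fun l => σ i * if l = Fin.castLE hmn j then σ j else 0)]
    · by_cases h : i = j
      · simp [h, sq]
      · have : ¬ Fin.castLE hmn i = Fin.castLE hmn j := by
          simpa [Fin.ext_iff] using fun hc => h (Fin.ext hc)
        simp [h, this]
    · by_cases h : l = Fin.castLE hmn i <;> simp [h]
  have hATA : Aᵀ * A = V * Matrix.diagonal (fun i => σ i ^ 2) * Vᵀ := by
    rw [hAT, hA]
    calc V * Sᵀ * Uᵀ * (U * S * Vᵀ) = V * (Sᵀ * ((Uᵀ * U) * S)) * Vᵀ := by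
          simp only [Matrix.mul_assoc]
      _ = V * Matrix.diagonal (fun i => σ i ^ 2) * Vᵀ := by
          rw [hU, Matrix.one_mul, hSS, Matrix.mul_assoc]
  have hpow : ∀ j : ℕ, (Aᵀ * A) ^ j =
      V * Matrix.diagonal (fun i => (σ i ^ 2) ^ j) * Vᵀ := by
    intro j
    induction j with
    | zero => simp [Matrix.diagonal_one, hV']
    | succ j ih =>
        rw [pow_succ, ih, hATA]
        calc V * Matrix.diagonal (fun i => (σ i ^ 2) ^ j) * Vᵀ *
              (V * Matrix.diagonal (fun i => σ i ^ 2) * Vᵀ)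
            = V * (Matrix.diagonal (fun i => (σ i ^ 2) ^ j) * ((Vᵀ * V) *
              Matrix.diagonal (fun i => σ i ^ 2))) * Vᵀ := by
              simp only [Matrix.mul_assoc]
          _ = _ := by
              rw [hV, Matrix.one_mul, Matrix.diagonal_mul_diagonal]
              simp only [Matrix.mul_assoc, ← pow_succ]
  -- Aᵀ b = V (σ d)
  have hATb : Aᵀ *ᵥ b = V *ᵥ (fun i => σ i * d i) := by
    rw [hAT, ← Matrix.mulVec_mulVec, ← Matrix.mulVec_mulVec]
    have : Sᵀ *ᵥ (Uᵀ *ᵥ b) = fun i => σ i * d i := by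
      ext i
      simp only [Matrix.mulVec, dotProduct, Matrix.transpose_apply, hSalt]
      rw [Finset.sum_congr rfl (fun l _ => ?_), Finset.sum_ite_eq'
        (Finset.univ : Finset (Fin m)) (Fin.castLE hmn i)
        (fun l => σ i * ∑ row, U row l * b row)]
      · simp [hd, Matrix.mulVec, dotProduct, mul_comm]
      · by_cases h : l = Fin.castLE hmn i <;> simp [h, Matrix.mulVec, dotProduct,
          mul_comm (U l _) (b l), Finset.mul_sum]
    rw [this]
  -- abbreviations
  set Dv : Fin (k + r) → ℝ := fun i => σ i * d i with hDv
  set T : Matrix (Fin (k + r)) (Fin k) ℝ :=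
    Matrix.of (fun (i : Fin (k + r)) (j : Fin k) => (σ i ^ 2) ^ (j : ℕ)) with hT
  set M : Matrix (Fin (k + r)) (Fin k) ℝ := V * Matrix.diagonal Dv * T with hM
  have hMent : ∀ i j, M i j = ∑ l, V i l * (Dv l * T l j) := by
    intro i j
    rw [hM, Matrix.mul_apply]
    refine Finset.sum_congr rfl fun l _ => ?_
    rw [Matrix.mul_diagonal, mul_assoc]
  -- Krylov columns are columns of M
  have hkry : (fun i : Fin k => ((Aᵀ * A) ^ (i : ℕ)) *ᵥ (Aᵀ *ᵥ b)) =
      fun j : Fin k => Mᵀ j := by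
    funext j
    rw [hpow, hATb, Matrix.mulVec_mulVec]
    have hcan : V * Matrix.diagonal (fun i => (σ i ^ 2) ^ (j : ℕ)) * Vᵀ * V
        = V * Matrix.diagonal (fun i => (σ i ^ 2) ^ (j : ℕ)) := by
      simp only [Matrix.mul_assoc, hV, Matrix.mul_one]
    rw [hcan]
    ext i
    simp only [Matrix.mulVec, dotProduct, Matrix.transpose_apply, hMent]
    refine Finset.sum_congr rfl fun l _ => ?_
    rw [Matrix.mul_diagonal]
    simp only [hDv, hT, Matrix.of_apply]
    ring
  -- invertibility of T₁ and D₁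
  have hσinj : Function.Injective σ := hσanti.injective
  have hT₁det : T₁.det ≠ 0 := by
    have hvdm : T₁ = Matrix.vandermonde (fun i : Fin k => σ (Fin.castAdd r i) ^ 2) := by
      rw [hT₁]; ext i j; simp [Matrix.vandermonde]
    rw [hvdm]
    refine Matrix.det_vandermonde_ne_zero_iff.mpr ?_
    intro a c hac
    have h1 : σ (Fin.castAdd r a) = σ (Fin.castAdd r c) :=
      (sq_eq_sq₀ (le_of_lt (hσpos _)) (le_of_lt (hσpos _))).mp hac
    have := hσinj h1
    exact Fin.castAdd_injective k r this
  have hD₁det : D₁.det ≠ 0 := by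
    rw [hD₁, Matrix.det_diagonal]
    exact Finset.prod_ne_zero_iff.mpr fun i _ =>
      mul_ne_zero (ne_of_gt (hσpos _)) (hb _)
  have hT₁inv : T₁⁻¹ * T₁ = 1 := Matrix.nonsing_inv_mul _ (Ne.isUnit hT₁det)
  have hT₁inv' : T₁ * T₁⁻¹ = 1 := Matrix.mul_nonsing_inv _ (Ne.isUnit hT₁det)
  have hD₁inv : D₁⁻¹ * D₁ = 1 := Matrix.nonsing_inv_mul _ (Ne.isUnit hD₁det)
  have hD₁inv' : D₁ * D₁⁻¹ = 1 := Matrix.mul_nonsing_inv _ (Ne.isUnit hD₁det)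
  -- the block matrix P
  set P : Matrix (Fin (k + r)) (Fin k) ℝ :=
    Matrix.of fun (i : Fin (k + r)) (j : Fin k) =>
      if h : (i : ℕ) < k then (if (⟨(i : ℕ), h⟩ : Fin k) = j then (1 : ℝ) else 0)
      else Δ ⟨(i : ℕ) - k, by have := i.isLt; omega⟩ j with hPdef
  have hZP : Z = V * P := hZ
  have hΔDT : Δ * (D₁ * T₁) = D₂ * T₂ := by
    rw [hΔ]
    calc D₂ * T₂ * T₁⁻¹ * D₁⁻¹ * (D₁ * T₁)
        = D₂ * T₂ * (T₁⁻¹ * ((D₁⁻¹ * D₁) * T₁)) := by simp only [Matrix.mul_assoc]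
      _ = D₂ * T₂ := by rw [hD₁inv, Matrix.one_mul, hT₁inv, Matrix.mul_one]
  have hPD : P * (D₁ * T₁) = Matrix.diagonal Dv * T := by
    ext i j
    rw [Matrix.mul_apply, Matrix.diagonal_mul]
    by_cases h : (i : ℕ) < k
    · have hsum : ∀ l : Fin k, P i l * (D₁ * T₁) l j =
          if (⟨(i : ℕ), h⟩ : Fin k) = l then (D₁ * T₁) l j else 0 := by
        intro l
        rw [hPdef]
        simp only [Matrix.of_apply, dif_pos h, ite_mul, one_mul, zero_mul]
      rw [Finset.sum_congr rfl (fun l _ => hsum l), Finset.sum_ite_eq]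
      have hcast : Fin.castAdd r (⟨(i : ℕ), h⟩ : Fin k) = i := by
        simp [Fin.ext_iff]
      rw [if_pos (Finset.mem_univ _), Matrix.mul_apply, hD₁, hT₁]
      simp only [Matrix.diagonal_apply, ite_mul, zero_mul, Finset.sum_ite_eq,
        Finset.mem_univ, if_pos, Matrix.of_apply, hcast, hDv, hT]
    · have hsum : ∀ l : Fin k, P i l * (D₁ * T₁) l j =
          Δ ⟨(i : ℕ) - k, by have := i.isLt; omega⟩ l * (D₁ * T₁) l j := by
        intro l
        rw [hPdef]
        simp only [Matrix.of_apply, dif_neg h]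
      rw [Finset.sum_congr rfl (fun l _ => hsum l), ← Matrix.mul_apply, hΔDT]
      have hnat : Fin.natAdd k (⟨(i : ℕ) - k, by have := i.isLt; omega⟩ : Fin r) = i := by
        simp [Fin.ext_iff]; omega
      rw [Matrix.mul_apply, hD₂, hT₂]
      simp only [Matrix.diagonal_apply, ite_mul, zero_mul, Finset.sum_ite_eq,
        Finset.mem_univ, if_pos, Matrix.of_apply, hnat, hDv, hT]
  -- Z = M * (T₁⁻¹ * D₁⁻¹)
  have hDTinv : (D₁ * T₁) * (T₁⁻¹ * D₁⁻¹) = 1 := by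
    calc D₁ * T₁ * (T₁⁻¹ * D₁⁻¹) = D₁ * ((T₁ * T₁⁻¹) * D₁⁻¹) := by
          simp only [Matrix.mul_assoc]
      _ = 1 := by rw [hT₁inv', Matrix.one_mul, hD₁inv']
  have hPM : P = Matrix.diagonal Dv * T * (T₁⁻¹ * D₁⁻¹) := by
    rw [← hPD, Matrix.mul_assoc, hDTinv, Matrix.mul_one]
  have hZM : Z = M * (T₁⁻¹ * D₁⁻¹) := by
    rw [hZP, hPM, hM]
    simp only [Matrix.mul_assoc]
  -- the right factor is invertible
  have hNunit : IsUnit (T₁⁻¹ * D₁⁻¹).det := by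
    have hone : (T₁⁻¹ * D₁⁻¹) * (D₁ * T₁) = 1 := by
      calc T₁⁻¹ * D₁⁻¹ * (D₁ * T₁) = T₁⁻¹ * ((D₁⁻¹ * D₁) * T₁) := by
            simp only [Matrix.mul_assoc]
        _ = 1 := by rw [hD₁inv, Matrix.one_mul, hT₁inv]
    exact Matrix.isUnit_det_of_right_inverse hone
  -- span invariance under right multiplication by an invertible matrix
  have hspan : Submodule.span ℝ (Set.range (M * (T₁⁻¹ * D₁⁻¹))ᵀ) =
      Submodule.span ℝ (Set.range Mᵀ) := by
    change Submodule.span ℝ (Set.range (M * (T₁⁻¹ * D₁⁻¹)).col) = Submodule.span ℝ (Set.range M.col)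
    rw [← Matrix.range_mulVecLin, ← Matrix.range_mulVecLin, Matrix.mulVecLin_mul,
      LinearMap.range_comp, LinearMap.range_eq_top.mpr, Submodule.map_top]
    intro y
    exact ⟨(T₁⁻¹ * D₁⁻¹)⁻¹ *ᵥ y, by
      rw [Matrix.mulVecLin_apply, Matrix.mulVec_mulVec,
        Matrix.mul_nonsing_inv _ hNunit, Matrix.one_mulVec]⟩
  have hspans : Submodule.span ℝ (Set.range fun i : Fin k =>
      ((Aᵀ * A) ^ (i : ℕ)) *ᵥ (Aᵀ *ᵥ b)) =
      Submodule.span ℝ (Set.range fun j : Fin k => Zᵀ j) := by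
    rw [hkry, hZM, hspan]
  refine ⟨?_, hspans⟩
  -- dimension count
  rw [hspans]
  have hZinj : Function.Injective Z.mulVecLin := by
    rw [← LinearMap.ker_eq_bot]
    refine (Submodule.eq_bot_iff _).mpr fun x hx => ?_
    have hx0 : Z *ᵥ x = 0 := hx
    have hPx : P *ᵥ x = 0 := by
      have h1 : Vᵀ *ᵥ (Z *ᵥ x) = P *ᵥ x := by
        rw [hZP, Matrix.mulVec_mulVec, ← Matrix.mul_assoc, hV, Matrix.one_mul]
      rw [← h1, hx0, Matrix.mulVec_zero]
    funext j
    have h2 : (P *ᵥ x) (Fin.castAdd r j) = x j := by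
      have hlt : ((Fin.castAdd r j : Fin (k + r)) : ℕ) < k := j.isLt
      have hsum : ∀ l : Fin k, P (Fin.castAdd r j) l * x l =
          if j = l then x l else 0 := by
        intro l
        rw [hPdef]
        simp only [Matrix.of_apply, dif_pos hlt, ite_mul, one_mul, zero_mul]
        congr 1
      simp only [Matrix.mulVec, dotProduct]
      rw [Finset.sum_congr rfl (fun l _ => hsum l), Finset.sum_ite_eq,
        if_pos (Finset.mem_univ _)]
    have := congrFun hPx (Fin.castAdd r j)
    rw [h2] at this
    exact this
  change Module.finrank ℝ (Submodule.span ℝ (Set.range Z.col)) = k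
  rw [← Matrix.range_mulVecLin, LinearMap.finrank_range_of_inj hZinj]
  exact Module.finrank_fin_fun ℝ
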